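/- Let P and N be finite index sets, A a real P×N matrix, c_p > 0 for each p ∈ P, and d ∈ ℝ^N such that the affine set {f ∈ ℝ^P : Aᵀ f = d} is nonempty. If f̄ minimizes F(f) = ∑_{p∈P} (c_p/3)|f_p|³ over this affine set, then there exists ξ ∈ ℝ^N (a vector of Lagrange multipliers / nodal pressures) such that c_p · sign(f̄_p) · f̄_p² = (A ξ)_p for every p ∈ P; hence (f̄, ξ) satisfies the Darcy–Weisbach water flow equations. -/

import Mathlib

open Matrix

lemma habs3 (x : ℝ) : HasDerivAt (fun y : ℝ => |y| ^ 3) (3 * (x * |x|)) x := by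
  rcases eq_or_ne x 0 with rfl | hx
  · rw [hasDerivAt_iff_isLittleO_nhds_zero]
    simp only [zero_add, abs_zero, mul_zero, sub_zero, smul_zero]
    rw [Asymptotics.isLittleO_iff]
    intro ε hε
    filter_upwards [Metric.ball_mem_nhds 0 (Real.sqrt_pos.2 hε)] with h hh
    simp only [Metric.mem_ball, Real.dist_eq, sub_zero] at hh
    have h2 : |h| ^ 2 ≤ ε := by
      nlinarith [Real.sq_sqrt hε.le, abs_nonneg h, Real.sqrt_nonneg ε]
    calc ‖|h| ^ 3 - 0 ^ 3‖ = |h| ^ 2 * |h| := by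
          rw [Real.norm_eq_abs]
          rw [abs_of_nonneg (by simp : (0:ℝ) ≤ |h| ^ 3 - 0 ^ 3)]
          ring
      _ ≤ ε * ‖h‖ := by rw [Real.norm_eq_abs]; nlinarith [abs_nonneg h]
  · have := (hasDerivAt_abs hx).fun_pow 3
    refine this.congr_deriv ?_
    rcases hx.lt_or_gt with h | h
    · simp [abs_of_neg h, sign_neg h]
      ring
    · simp [abs_of_pos h, sign_pos h]
      ring

/-- A minimizer of the energy function `F f = ∑ (c p / 3)|f p|³` over
`{f : Aᵀ f = d}` admits Lagrange multipliers (nodal pressures) `ξ` so that the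
Darcy–Weisbach equations hold. -/
theorem energy_minimizer_satisfies_darcy_weisbach {P N : Type*} [Fintype P] [Fintype N]
    (A : Matrix P N ℝ) (c : P → ℝ) (hc : ∀ p, 0 < c p) (d : N → ℝ)
    (fbar : P → ℝ)
    (hfeas : Aᵀ.mulVec fbar = d)
    (hmin : ∀ f : P → ℝ, Aᵀ.mulVec f = d →
      ∑ p, c p / 3 * |fbar p| ^ 3 ≤ ∑ p, c p / 3 * |f p| ^ 3) :
    ∃ ξ : N → ℝ, ∀ p, c p * Real.sign (fbar p) * (fbar p) ^ 2 = A.mulVec ξ p := by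
  classical
  set g : P → ℝ := fun p => c p * (fbar p * |fbar p|) with hg
  -- Step 1: g is orthogonal to ker Aᵀ
  have key : ∀ v : P → ℝ, Aᵀ.mulVec v = 0 → ∑ p, g p * v p = 0 := by
    intro v hv
    set φ : ℝ → ℝ := fun t => ∑ p, c p / 3 * |fbar p + t * v p| ^ 3 with hφ
    have hφd : HasDerivAt φ (∑ p, c p / 3 * (3 * (fbar p * |fbar p|) * v p)) 0 := by
      apply HasDerivAt.fun_sum
      intro p _
      have h1 : HasDerivAt (fun t : ℝ => fbar p + t * v p) (v p) 0 :=
        (hasDerivAt_mul_const (v p)).const_add (fbar p)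
      have h2 := (habs3 (fbar p + 0 * v p)).comp 0 h1
      have h3 := h2.const_mul (c p / 3)
      simpa [mul_assoc] using h3
    have hloc : IsLocalMin φ 0 := by
      apply Filter.Eventually.of_forall
      intro t
      have hfeas' : Aᵀ.mulVec (fun p => fbar p + t * v p) = d := by
        have : (fun p => fbar p + t * v p) = fbar + t • v := rfl
        rw [this, Matrix.mulVec_add, Matrix.mulVec_smul, hfeas, hv, smul_zero, add_zero]
      have := hmin _ hfeas'
      simpa [hφ] using this
    have hzero := hloc.hasDerivAt_eq_zero hφd
    calc ∑ p, g p * v p = ∑ p, c p / 3 * (3 * (fbar p * |fbar p|) * v p) := by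
          apply Finset.sum_congr rfl; intro p _; rw [hg]; ring
      _ = 0 := hzero
  -- Step 2: g is in the range of A.mulVec
  let e := WithLp.linearEquiv 2 ℝ (P → ℝ)
  let K : Submodule ℝ (EuclideanSpace ℝ P) :=
    (LinearMap.range A.mulVecLin).map (e.symm : (P → ℝ) →ₗ[ℝ] EuclideanSpace ℝ P)
  have hgK : e.symm g ∈ K := by
    rw [← Submodule.orthogonal_orthogonal K, Submodule.mem_orthogonal]
    intro v hv
    have hAv : Aᵀ.mulVec (e v) = 0 := by
      set w : N → ℝ := Aᵀ.mulVec (e v) with hw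
      have hu : e.symm (A.mulVec w) ∈ K := Submodule.mem_map_of_mem ⟨w, rfl⟩
      have h0 := hv _ hu
      have hinner : (inner ℝ (e.symm (A.mulVec w)) v : ℝ) = ∑ p, A.mulVec w p * e v p := by
        simp [PiLp.inner_apply, RCLike.inner_apply]
        exact Finset.sum_congr rfl fun p _ => mul_comm _ _
      have hdp : ∑ p, A.mulVec w p * e v p = w ⬝ᵥ w := by
        have h1 : ∑ p, A.mulVec w p * e v p = (A.mulVec w) ⬝ᵥ (e v) := rfl
        rw [h1, dotProduct_comm, dotProduct_mulVec]
        have h2 : e v ᵥ* A = w := by rw [hw, Matrix.mulVec_transpose]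
        rw [h2]
      have hww : w ⬝ᵥ w = 0 := by rw [← hdp, ← hinner, h0]
      funext n
      have hnn : ∀ m, 0 ≤ w m * w m := fun m => mul_self_nonneg _
      have h3 := (Finset.sum_eq_zero_iff_of_nonneg (fun m _ => hnn m)).1 hww n (Finset.mem_univ n)
      simpa using mul_self_eq_zero.1 h3
    have hk := key (e v) hAv
    have : (inner ℝ v (e.symm g) : ℝ) = ∑ p, g p * e v p := by
      simp only [PiLp.inner_apply, RCLike.inner_apply, starRingEnd_apply, star_trivial]
      exact Finset.sum_congr rfl fun p _ => rfl
    rw [this, hk]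
  obtain ⟨u, ⟨ξ, hξ⟩, hu⟩ := hgK
  have hAg : A.mulVec ξ = g := by
    have h4 : u = g := e.symm.injective hu
    rw [← h4, ← hξ]
    rfl
  refine ⟨ξ, fun p => ?_⟩
  rw [hAg]
  show c p * Real.sign (fbar p) * fbar p ^ 2 = c p * (fbar p * |fbar p|)
  rcases lt_trichotomy (fbar p) 0 with h | h | h
  · rw [Real.sign_of_neg h, abs_of_neg h]; ring
  · simp [h]
  · rw [Real.sign_of_pos h, abs_of_pos h]; ring
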